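/- Let 0 < Y < 2 and define J_Y(λ) = √(λ/(2π)) ∫_0^∞ e^{−λh/2} h^{(Y−1)/2} (1+h)^{−Y/2} dh for λ > 0. Then J_Y(λ) ≤ 1 for every λ > 0. -/

import Mathlib

open MeasureTheory Real Set

/-- `J_Y(λ) = √(λ/(2π)) ∫_0^∞ e^{-λh/2} h^{(Y-1)/2} (1+h)^{-Y/2} dh`. -/
noncomputable def JFun (Y l : ℝ) : ℝ :=
  Real.sqrt (l / (2 * π)) *
    ∫ h in Ioi (0:ℝ), Real.exp (-(l * h / 2)) * h ^ ((Y-1)/2) * (1+h) ^ (-(Y/2))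

/-- `J_Y(λ) ≤ 1` for every `λ > 0`. -/
theorem JFun_le_one (Y : ℝ) (hY0 : 0 < Y) (hY2 : Y < 2) :
    ∀ l : ℝ, 0 < l → JFun Y l ≤ 1 := by
  intro l hl
  have hl2 : (0:ℝ) < l / 2 := by linarith
  -- integrability of the majorant
  have hg : IntegrableOn (fun h : ℝ => h ^ (-(1:ℝ)/2) * Real.exp (-(l/2) * h)) (Ioi 0) := by
    have := integrableOn_rpow_mul_exp_neg_mul_rpow (p := 1) (s := -(1:ℝ)/2) (b := l/2)
      (by norm_num) (by norm_num) hl2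
    refine this.congr_fun (fun x hx => ?_) measurableSet_Ioi
    simp only [Real.rpow_one]
  -- value of the majorant integral
  have hval : ∫ h in Ioi (0:ℝ), h ^ (-(1:ℝ)/2) * Real.exp (-(l/2) * h)
      = (1 / (l/2)) ^ ((1:ℝ)/2) * Real.Gamma (1/2) := by
    have := Real.integral_rpow_mul_exp_neg_mul_Ioi (a := (1:ℝ)/2) (r := l/2)
      (by norm_num) hl2
    rw [← this]
    refine setIntegral_congr_fun measurableSet_Ioi (fun x hx => ?_)
    norm_num
  -- pointwise bound
  have hbound : ∫ h in Ioi (0:ℝ), Real.exp (-(l * h / 2)) * h ^ ((Y-1)/2) * (1+h) ^ (-(Y/2))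
      ≤ ∫ h in Ioi (0:ℝ), h ^ (-(1:ℝ)/2) * Real.exp (-(l/2) * h) := by
    refine integral_mono_of_nonneg ?_ hg ?_
    · filter_upwards [ae_restrict_mem measurableSet_Ioi] with x hx
      have hx0 : (0:ℝ) < x := hx
      positivity
    · filter_upwards [ae_restrict_mem measurableSet_Ioi] with x hx
      have hx0 : (0:ℝ) < x := hx
      have h1 : x ^ ((Y-1)/2) = x ^ (-(1:ℝ)/2) * x ^ (Y/2) := by
        rw [← Real.rpow_add hx0]; ring_nf
      have h2 : (1+x) ^ (-(Y/2)) ≤ x ^ (-(Y/2)) :=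
        Real.rpow_le_rpow_of_nonpos hx0 (by linarith) (by linarith)
      have h3 : x ^ (Y/2) * (1+x) ^ (-(Y/2)) ≤ 1 := by
        calc x ^ (Y/2) * (1+x) ^ (-(Y/2)) ≤ x ^ (Y/2) * x ^ (-(Y/2)) :=
              mul_le_mul_of_nonneg_left h2 (by positivity)
          _ = 1 := by rw [← Real.rpow_add hx0]; simp
      have hexp : Real.exp (-(l * x / 2)) = Real.exp (-(l/2) * x) := by ring_nf
      calc Real.exp (-(l * x / 2)) * x ^ ((Y-1)/2) * (1+x) ^ (-(Y/2))
          = (x ^ (-(1:ℝ)/2) * Real.exp (-(l/2) * x)) * (x ^ (Y/2) * (1+x) ^ (-(Y/2))) := by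
            rw [h1, hexp]; ring
        _ ≤ (x ^ (-(1:ℝ)/2) * Real.exp (-(l/2) * x)) * 1 :=
            mul_le_mul_of_nonneg_left h3 (by positivity)
        _ = x ^ (-(1:ℝ)/2) * Real.exp (-(l/2) * x) := by ring
  -- combine
  have hπ : (0:ℝ) < π := Real.pi_pos
  rw [JFun]
  calc Real.sqrt (l / (2 * π)) *
        ∫ h in Ioi (0:ℝ), Real.exp (-(l * h / 2)) * h ^ ((Y-1)/2) * (1+h) ^ (-(Y/2))
      ≤ Real.sqrt (l / (2 * π)) * ((1 / (l/2)) ^ ((1:ℝ)/2) * Real.Gamma (1/2)) := by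
        rw [← hval]
        exact mul_le_mul_of_nonneg_left hbound (Real.sqrt_nonneg _)
    _ = 1 := by
        rw [Real.Gamma_one_half_eq, ← Real.sqrt_eq_rpow]
        rw [← mul_assoc, ← Real.sqrt_mul (by positivity : (0:ℝ) ≤ l / (2*π)),
          ← Real.sqrt_mul (by positivity : (0:ℝ) ≤ l / (2*π) * (1/(l/2)))]
        rw [show l / (2 * π) * (1/(l/2)) * π = 1 by field_simp]
        exact Real.sqrt_one
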